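/- Let E be a real inner product space, b₁,…,b_r ∈ E linearly independent with Gram–Schmidt vectors b_i^*, and let 1/4 < δ < 1. Suppose the basis is δ-LLL reduced. Fix 1 ≤ j ≤ k ≤ r, set β = k − j + 1 and R_i = ‖b_j^*‖/‖b_i^*‖ for j ≤ i ≤ k. Then the total qubit count n := Σ_{i=j}^{k} (⌊log₂ R_i⌋ + 1) satisfies n ≤ β − ⌊(β(β−1)/4) · log₂(δ − 1/4)⌋, where ⌊·⌋ is the integer floor and log₂ is the base-2 logarithm of a positive real. -/

import Mathlib

open scoped InnerProductSpace

/-- The Gram–Schmidt orthogonalization `b*` of a finite family `b : Fin r → E`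
(Mathlib's `gramSchmidt`, specialized to the index type `Fin r` over `ℝ`):
`b*_i = b_i - ∑_{l<i} μ_{i,l} b*_l`. -/
noncomputable def gso {E : Type*} [NormedAddCommGroup E] [InnerProductSpace ℝ E]
    {r : ℕ} (b : Fin r → E) : Fin r → E :=
  @InnerProductSpace.gramSchmidt ℝ E _ _ _ (Fin r) _ _ (inferInstance : WellFoundedLT (Fin r)) b

/-- The Gram–Schmidt coefficient `μ_{i,l} = ⟪b_i, b*_l⟫ / ⟪b*_l, b*_l⟫`. -/
noncomputable def gsCoeff {E : Type*} [NormedAddCommGroup E] [InnerProductSpace ℝ E]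
    {r : ℕ} (b : Fin r → E) (i l : Fin r) : ℝ :=
  ⟪b i, gso b l⟫_ℝ / ⟪gso b l, gso b l⟫_ℝ

/-- A basis `b` is `δ`-LLL reduced if it is size-reduced (`|μ_{i,l}| ≤ 1/2` for `l < i`)
and satisfies the Lovász condition
`δ‖b*_{t}‖² ≤ ‖b*_{t+1} + μ_{t+1,t} b*_{t}‖²` for all `t+1 < r`. -/
def IsLLLReduced {E : Type*} [NormedAddCommGroup E] [InnerProductSpace ℝ E]
    (δ : ℝ) {r : ℕ} (b : Fin r → E) : Prop :=
  (∀ i l : Fin r, l < i → |gsCoeff b i l| ≤ 1 / 2) ∧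
  ∀ (t : ℕ) (ht : t + 1 < r),
    δ * ‖gso b ⟨t, Nat.lt_of_succ_lt ht⟩‖ ^ 2 ≤
      ‖gso b ⟨t + 1, ht⟩ +
        gsCoeff b ⟨t + 1, ht⟩ ⟨t, Nat.lt_of_succ_lt ht⟩ •
          gso b ⟨t, Nat.lt_of_succ_lt ht⟩‖ ^ 2

lemma gso_orth {E : Type*} [NormedAddCommGroup E] [InnerProductSpace ℝ E]
    {r : ℕ} (b : Fin r → E) {a c : Fin r} (h : a ≠ c) : ⟪gso b a, gso b c⟫_ℝ = 0 :=
  @InnerProductSpace.gramSchmidt_orthogonal ℝ E _ _ _ (Fin r) _ _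
    (inferInstance : WellFoundedLT (Fin r)) b a c h

lemma gso_ne_zero {E : Type*} [NormedAddCommGroup E] [InnerProductSpace ℝ E]
    {r : ℕ} {b : Fin r → E} (hb : LinearIndependent ℝ b) (n : Fin r) : gso b n ≠ 0 :=
  @InnerProductSpace.gramSchmidt_ne_zero ℝ E _ _ _ (Fin r) _ _
    (inferInstance : WellFoundedLT (Fin r)) b n hb

lemma lll_step {E : Type*} [NormedAddCommGroup E] [InnerProductSpace ℝ E]
    {r : ℕ} (b : Fin r → E)
    (δ : ℝ) (hLLL : IsLLLReduced δ b) (t : ℕ) (ht : t + 1 < r) :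
    (δ - 1/4) * ‖gso b ⟨t, Nat.lt_of_succ_lt ht⟩‖ ^ 2 ≤ ‖gso b ⟨t+1, ht⟩‖ ^ 2 := by
  set u := gso b ⟨t, Nat.lt_of_succ_lt ht⟩
  set v := gso b ⟨t+1, ht⟩
  set μ := gsCoeff b ⟨t + 1, ht⟩ ⟨t, Nat.lt_of_succ_lt ht⟩
  have horth : ⟪v, u⟫_ℝ = 0 := gso_orth b (by simp [Fin.ext_iff])
  have hexp : ‖v + μ • u‖ ^ 2 = ‖v‖ ^ 2 + μ ^ 2 * ‖u‖ ^ 2 := by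
    rw [norm_add_sq_real, real_inner_smul_right, horth, norm_smul]
    simp [mul_pow]
  have hμ : |μ| ≤ 1/2 := hLLL.1 _ _ (by simp [Fin.lt_iff_val_lt_val])
  have hμ2 : μ ^ 2 ≤ 1/4 := by nlinarith [abs_nonneg μ, sq_abs μ]
  have := hLLL.2 t ht
  nlinarith [sq_nonneg ‖u‖]

lemma lll_iter {E : Type*} [NormedAddCommGroup E] [InnerProductSpace ℝ E]
    {r : ℕ} (b : Fin r → E)
    (δ : ℝ) (hδ : 1/4 < δ) (hLLL : IsLLLReduced δ b) (j : Fin r) (m : ℕ)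
    (h : (j : ℕ) + m < r) :
    (δ - 1/4) ^ m * ‖gso b j‖ ^ 2 ≤ ‖gso b ⟨(j : ℕ) + m, h⟩‖ ^ 2 := by
  induction m with
  | zero => simp
  | succ m ih =>
    have h' : (j : ℕ) + m < r := by omega
    have hstep := lll_step b δ hLLL ((j : ℕ) + m) (by omega : (j:ℕ) + m + 1 < r)
    have ih' := ih h'
    have hα : (0:ℝ) < δ - 1/4 := by linarith
    calc (δ - 1/4) ^ (m+1) * ‖gso b j‖ ^ 2
        = (δ - 1/4) * ((δ - 1/4) ^ m * ‖gso b j‖ ^ 2) := by ring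
      _ ≤ (δ - 1/4) * ‖gso b ⟨(j : ℕ) + m, h'⟩‖ ^ 2 := by
          exact mul_le_mul_of_nonneg_left ih' hα.le
      _ ≤ ‖gso b ⟨(j : ℕ) + m + 1, by omega⟩‖ ^ 2 := hstep
      _ = ‖gso b ⟨(j : ℕ) + (m + 1), by omega⟩‖ ^ 2 := by
          congr 1

/-- If `b` is `δ`-LLL reduced with `1/4 < δ < 1`, `j ≤ k`,
`β = k - j + 1`, and `R_i = ‖b*_j‖ / ‖b*_i‖`, then the total qubit count
`n = ∑_{i=j}^{k} (⌊log₂ R_i⌋ + 1)` satisfies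
`n ≤ β - ⌊(β(β-1)/4) ⬝ log₂ (δ - 1/4)⌋`. -/
theorem qubit_count_le_of_isLLLReduced
    {E : Type*} [NormedAddCommGroup E] [InnerProductSpace ℝ E]
    {r : ℕ} (b : Fin r → E) (hb : LinearIndependent ℝ b)
    (δ : ℝ) (hδ : 1 / 4 < δ) (hδ' : δ < 1) (hLLL : IsLLLReduced δ b)
    (j k : Fin r) (hjk : j ≤ k) (β : ℕ) (hβ : β = (k : ℕ) - (j : ℕ) + 1) :
    ∑ i ∈ Finset.Icc j k, (⌊Real.logb 2 (‖gso b j‖ / ‖gso b i‖)⌋ + 1) ≤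
      (β : ℤ) - ⌊(β : ℝ) * ((β : ℝ) - 1) / 4 * Real.logb 2 (δ - 1 / 4)⌋ := by
  set L := Real.logb 2 (δ - 1/4) with hL
  have hα : (0:ℝ) < δ - 1/4 := by linarith
  -- termwise bound on logb
  have hterm : ∀ i ∈ Finset.Icc j k,
      Real.logb 2 (‖gso b j‖ / ‖gso b i‖) ≤ (((i:ℕ) - (j:ℕ) : ℕ) : ℝ) * (-L/2) := by
    intro i hi
    rw [Finset.mem_Icc] at hi
    set m : ℕ := (i:ℕ) - (j:ℕ) with hm
    have him : i = ⟨(j:ℕ) + m, by omega⟩ := by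
      apply Fin.ext; simp [hm]; omega
    have hkey := lll_iter b δ hδ hLLL j m (by omega)
    rw [← him] at hkey
    have hj0 : (0:ℝ) < ‖gso b j‖ := norm_pos_iff.mpr (gso_ne_zero hb j)
    have hi0 : (0:ℝ) < ‖gso b i‖ := norm_pos_iff.mpr (gso_ne_zero hb i)
    have hlog := Real.logb_le_logb_of_le (b := 2) one_lt_two
      (by positivity : (0:ℝ) < (δ - 1/4)^m * ‖gso b j‖^2) hkey
    rw [Real.logb_mul (by positivity) (by positivity), Real.logb_pow, Real.logb_pow,
      Real.logb_pow] at hlog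
    rw [Real.logb_div hj0.ne' hi0.ne']
    push_cast at hlog ⊢
    linarith
  -- sum of the m's
  have hsum : ∑ i ∈ Finset.Icc j k, ((((i:ℕ) - (j:ℕ) : ℕ) : ℝ)) =
      (β : ℝ) * ((β : ℝ) - 1) / 2 := by
    have h1 : ∑ i ∈ Finset.Icc j k, ((((i:ℕ) - (j:ℕ) : ℕ) : ℝ))
        = ∑ n ∈ Finset.Icc (j:ℕ) (k:ℕ), (((n - (j:ℕ) : ℕ)) : ℝ) := by
      rw [← Fin.map_valEmbedding_Icc, Finset.sum_map]
      rfl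
    rw [h1, ← Finset.Ico_add_one_right_eq_Icc, Finset.sum_Ico_eq_sum_range]
    have hβ' : (k:ℕ) + 1 - (j:ℕ) = β := by omega
    rw [hβ']
    have h2 : ∀ i ∈ Finset.range β, ((((j:ℕ) + i - (j:ℕ) : ℕ)) : ℝ) = (i : ℝ) := by
      intro i _; congr 1; omega
    rw [Finset.sum_congr rfl h2]
    have h3 := Finset.sum_range_id_mul_two β
    have h4 : ((∑ i ∈ Finset.range β, i : ℕ) : ℝ) * 2 = (β : ℝ) * ((β : ℝ) - 1) := by
      rw [← Nat.cast_ofNat, ← Nat.cast_mul, h3]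
      have : 1 ≤ β := by omega
      push_cast [this]
      ring
    push_cast at h4 ⊢
    linarith
  -- assemble
  have hcard : (Finset.Icc j k).card = β := by
    rw [Fin.card_Icc]; omega
  rw [Finset.sum_add_distrib, Finset.sum_const, hcard, nsmul_eq_mul, mul_one]
  have hreal : ((∑ i ∈ Finset.Icc j k, ⌊Real.logb 2 (‖gso b j‖ / ‖gso b i‖)⌋ : ℤ) : ℝ)
      ≤ -((β : ℝ) * ((β : ℝ) - 1) / 4 * L) := by
    push_cast
    calc (∑ i ∈ Finset.Icc j k, (⌊Real.logb 2 (‖gso b j‖ / ‖gso b i‖)⌋ : ℝ))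
        ≤ ∑ i ∈ Finset.Icc j k, Real.logb 2 (‖gso b j‖ / ‖gso b i‖) :=
          Finset.sum_le_sum fun i _ => Int.floor_le _
      _ ≤ ∑ i ∈ Finset.Icc j k, (((i:ℕ) - (j:ℕ) : ℕ) : ℝ) * (-L/2) :=
          Finset.sum_le_sum hterm
      _ = (∑ i ∈ Finset.Icc j k, (((i:ℕ) - (j:ℕ) : ℕ) : ℝ)) * (-L/2) := by
          rw [Finset.sum_mul]
      _ = -((β : ℝ) * ((β : ℝ) - 1) / 4 * L) := by rw [hsum]; ring
  have h5 : ∑ i ∈ Finset.Icc j k, ⌊Real.logb 2 (‖gso b j‖ / ‖gso b i‖)⌋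
      ≤ ⌊-((β : ℝ) * ((β : ℝ) - 1) / 4 * L)⌋ := Int.le_floor.mpr hreal
  have h6 : ⌊-((β : ℝ) * ((β : ℝ) - 1) / 4 * L)⌋
      = -⌈(β : ℝ) * ((β : ℝ) - 1) / 4 * L⌉ := Int.floor_neg
  have h7 := Int.floor_le_ceil ((β : ℝ) * ((β : ℝ) - 1) / 4 * L)
  omega
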